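/- arXiv:2308.16384 — 3 statements merged into one kernel-verified Lean document; each statement's English description precedes it below -/
import Mathlib

section
/- Let p be a prime, Λ = Z_p[[T]], γ = 1+T, and Λ_n = Λ/(γ^{p^n}-1) ≅ Z_p[X]/((1+X)^{p^n}-1). For n ≤ m, define h : Λ_n² → Λ_m² by h(x) = (∏_{n+1≤k≤m} φ_{p^k}(γ))·x', where x' is any lift of x under the canonical projection Λ_m² → Λ_n². Then h is well-defined (independent of the lift), injective, and its cokernel is a free Z_p-module; consequently the induced map h* : Hom_{Z_p}(Λ_m², Z/p^j Z) → Hom_{Z_p}(Λ_n², Z/p^j Z) is surjective for every positive integer j. -/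
open Polynomial

noncomputable def levelIdeal (p : ℕ) [Fact p.Prime] (n : ℕ) : Ideal (Polynomial ℤ_[p]) :=
  Ideal.span {((1 + Polynomial.X : Polynomial ℤ_[p]) ^ (p ^ n) - 1)}

/-- `Λ_n = ℤ_p[X]/((1+X)^{p^n} - 1)`. -/
noncomputable abbrev IwasawaLevel (p : ℕ) [Fact p.Prime] (n : ℕ) : Type :=
  Polynomial ℤ_[p] ⧸ levelIdeal p n

/-- Projection `ℤ_p[X]² → Λ_n²`. -/
noncomputable def proj (p : ℕ) [Fact p.Prime] (n : ℕ)
    (x : Polynomial ℤ_[p] × Polynomial ℤ_[p]) : IwasawaLevel p n × IwasawaLevel p n :=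
  (Ideal.Quotient.mk (levelIdeal p n) x.1, Ideal.Quotient.mk (levelIdeal p n) x.2)

/-- The element `∏_{n+1 ≤ k ≤ m} φ_{p^k}(γ)` of `Λ_m`, with `γ = 1 + X`. -/
noncomputable def cofactor (p : ℕ) [Fact p.Prime] (n m : ℕ) : IwasawaLevel p m :=
  Ideal.Quotient.mk (levelIdeal p m)
    (∏ k ∈ Finset.Icc (n + 1) m,
      (Polynomial.cyclotomic (p ^ k) ℤ_[p]).comp (Polynomial.X + 1))

noncomputable def zmodModule (p : ℕ) [Fact p.Prime] (j : ℕ) :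
    Module ℤ_[p] (ZMod (p ^ j)) :=
  (PadicInt.toZModPow j).toModule

set_option maxHeartbeats 1000000

section Aux

variable (p : ℕ) [Fact p.Prime]

noncomputable def cofPoly (n m : ℕ) : Polynomial ℤ_[p] :=
  ∏ k ∈ Finset.Icc (n + 1) m, (cyclotomic (p ^ k) ℤ_[p]).comp (X + 1)

lemma prod_cyc_range (r : ℕ) :
    ∏ k ∈ Finset.range (r + 1), cyclotomic (p ^ k) ℤ_[p] = X ^ p ^ r - 1 := by
  have hp : p.Prime := Fact.out
  rw [← prod_cyclotomic_eq_X_pow_sub_one (pow_pos hp.pos r) ℤ_[p],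
    Nat.divisors_prime_pow hp, Finset.prod_map]
  rfl

lemma key_prod {n m : ℕ} (hnm : n ≤ m) :
    ((1 + X : Polynomial ℤ_[p]) ^ p ^ n - 1) * cofPoly p n m = (1 + X) ^ p ^ m - 1 := by
  have h1 : ((X : Polynomial ℤ_[p]) ^ p ^ n - 1) *
      ∏ k ∈ Finset.Icc (n + 1) m, cyclotomic (p ^ k) ℤ_[p] = X ^ p ^ m - 1 := by
    rw [← prod_cyc_range p n, ← prod_cyc_range p m, ← Finset.Ico_add_one_right_eq_Icc]
    exact Finset.prod_range_mul_prod_Ico _ (Nat.succ_le_succ hnm)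
  have h2 := congrArg (fun q : Polynomial ℤ_[p] => q.comp (X + 1)) h1
  simpa [cofPoly, Polynomial.mul_comp, Polynomial.sub_comp, Polynomial.pow_comp,
    Polynomial.X_comp, Polynomial.one_comp, Polynomial.prod_comp, add_comm] using h2

lemma cof_monic (n m : ℕ) : (cofPoly p n m).Monic := by
  apply Polynomial.monic_prod_of_monic
  intro k _
  have h1 : (X + 1 : Polynomial ℤ_[p]) = X + C 1 := by rw [map_one]
  refine (cyclotomic.monic _ _).comp ?_ ?_
  · rw [h1]; exact monic_X_add_C 1
  · rw [h1, natDegree_X_add_C]; exact one_ne_zero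

noncomputable def fmap (n m : ℕ) : Polynomial ℤ_[p] →ₗ[Polynomial ℤ_[p]] IwasawaLevel p m :=
  (Submodule.mkQ (levelIdeal p m)) ∘ₗ LinearMap.mulLeft (Polynomial ℤ_[p]) (cofPoly p n m)

lemma fmap_apply (n m : ℕ) (a : Polynomial ℤ_[p]) :
    fmap p n m a = Ideal.Quotient.mk (levelIdeal p m) (cofPoly p n m * a) := rfl

lemma fker {n m : ℕ} (hnm : n ≤ m) : levelIdeal p n ≤ LinearMap.ker (fmap p n m) := by
  intro a ha
  obtain ⟨q, hq⟩ := Ideal.mem_span_singleton'.mp ha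
  rw [LinearMap.mem_ker, fmap_apply, Ideal.Quotient.eq_zero_iff_mem]
  refine Ideal.mem_span_singleton.mpr ⟨q, ?_⟩
  rw [← key_prod p hnm, ← hq]; ring

noncomputable def hOne {n m : ℕ} (hnm : n ≤ m) :
    IwasawaLevel p n →ₗ[Polynomial ℤ_[p]] IwasawaLevel p m :=
  Submodule.liftQ _ (fmap p n m) (fker p hnm)

lemma hOne_mk {n m : ℕ} (hnm : n ≤ m) (a : Polynomial ℤ_[p]) :
    hOne p hnm (Ideal.Quotient.mk (levelIdeal p n) a)
      = Ideal.Quotient.mk (levelIdeal p m) (cofPoly p n m * a) :=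
  Submodule.liftQ_apply _ _ _

lemma hOne_inj {n m : ℕ} (hnm : n ≤ m) : Function.Injective (hOne p hnm) := by
  rw [← LinearMap.ker_eq_bot]
  apply Submodule.ker_liftQ_eq_bot
  intro a ha
  rw [LinearMap.mem_ker, fmap_apply, Ideal.Quotient.eq_zero_iff_mem] at ha
  obtain ⟨q, hq⟩ := Ideal.mem_span_singleton'.mp ha
  have hc0 : cofPoly p n m ≠ 0 := (cof_monic p n m).ne_zero
  have : a = ((1 + X) ^ p ^ n - 1) * q := by
    apply mul_left_cancel₀ hc0
    linear_combination -hq - q * key_prod p hnm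
  exact Ideal.mem_span_singleton'.mpr ⟨q, by rw [this]; ring⟩

noncomputable def Jspan (n m : ℕ) : Ideal (Polynomial ℤ_[p]) := Ideal.span {cofPoly p n m}

lemma level_le_Jspan {n m : ℕ} (hnm : n ≤ m) : levelIdeal p m ≤ Jspan p n m := by
  rw [levelIdeal, Ideal.span_singleton_le_iff_mem]
  exact Ideal.mem_span_singleton.mpr ⟨(1 + X) ^ p ^ n - 1, by rw [← key_prod p hnm]; ring⟩

noncomputable def piMap {n m : ℕ} (hnm : n ≤ m) :
    IwasawaLevel p m →ₗ[Polynomial ℤ_[p]] Polynomial ℤ_[p] ⧸ Jspan p n m :=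
  Submodule.mapQ _ _ LinearMap.id (level_le_Jspan p hnm)

lemma piMap_mk {n m : ℕ} (hnm : n ≤ m) (a : Polynomial ℤ_[p]) :
    piMap p hnm (Ideal.Quotient.mk (levelIdeal p m) a) = Ideal.Quotient.mk (Jspan p n m) a :=
  Submodule.mapQ_apply _ _ _ a

lemma piMap_surj {n m : ℕ} (hnm : n ≤ m) : Function.Surjective (piMap p hnm) := by
  intro y
  obtain ⟨a, rfl⟩ := Ideal.Quotient.mk_surjective y
  exact ⟨Ideal.Quotient.mk _ a, piMap_mk p hnm a⟩

lemma piMap_comp_hOne {n m : ℕ} (hnm : n ≤ m) (w : IwasawaLevel p n) :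
    piMap p hnm (hOne p hnm w) = 0 := by
  obtain ⟨b, rfl⟩ := Ideal.Quotient.mk_surjective w
  rw [hOne_mk, piMap_mk, Ideal.Quotient.eq_zero_iff_mem]
  exact Ideal.mem_span_singleton.mpr (dvd_mul_right _ _)

lemma piMap_zero {n m : ℕ} (hnm : n ≤ m) (z : IwasawaLevel p m) (hz : piMap p hnm z = 0) :
    ∃ w, hOne p hnm w = z := by
  obtain ⟨a, rfl⟩ := Ideal.Quotient.mk_surjective z
  rw [piMap_mk, Ideal.Quotient.eq_zero_iff_mem] at hz
  obtain ⟨q, hq⟩ := Ideal.mem_span_singleton'.mp hz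
  exact ⟨Ideal.Quotient.mk _ q, by rw [hOne_mk, mul_comm, hq]⟩

lemma free_J (n m : ℕ) : Module.Free ℤ_[p] (Polynomial ℤ_[p] ⧸ Jspan p n m) :=
  Module.Free.of_basis (AdjoinRoot.powerBasis' (cof_monic p n m)).basis
lemma cofactor_smul {n m : ℕ} (hnm : n ≤ m) (a : Polynomial ℤ_[p]) :
    hOne p hnm (Ideal.Quotient.mk (levelIdeal p n) a)
      = (Ideal.Quotient.mk (levelIdeal p m) (cofPoly p n m))
          • Ideal.Quotient.mk (levelIdeal p m) a := by
  rw [hOne_mk, smul_eq_mul, ← map_mul]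

lemma surj_of_retraction {R M N : Type*} [CommRing R] [AddCommGroup M] [AddCommGroup N]
    [Module R M] [Module R N] (h : M →ₗ[R] N) (r : N →ₗ[R] M)
    (hr : r ∘ₗ h = LinearMap.id) (P : Type*) [AddCommMonoid P] [Module R P] :
    Function.Surjective (fun f : N →ₗ[R] P => f ∘ₗ h) := fun g =>
  ⟨g ∘ₗ r, by
    show (g ∘ₗ r) ∘ₗ h = g
    rw [LinearMap.comp_assoc, hr, LinearMap.comp_id]⟩

end Aux

/-- for `n ≤ m` there is a well-defined map `h : Λ_n² → Λ_m²` sending the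
class of `x'` to `∏_{n+1 ≤ k ≤ m} φ_{p^k}(γ) · x'` for any lift `x'`; it is injective
with cokernel a free `ℤ_p`-module, and the induced map
`h* : Hom_{ℤ_p}(Λ_m², ℤ/p^j) → Hom_{ℤ_p}(Λ_n², ℤ/p^j)` is surjective for all `j ≥ 1`. -/
theorem corestriction_map_exists (p : ℕ) [Fact p.Prime] (n m : ℕ) (hnm : n ≤ m) :
    ∃ h : (IwasawaLevel p n × IwasawaLevel p n) →ₗ[ℤ_[p]]
        (IwasawaLevel p m × IwasawaLevel p m),
      -- well-definedness: the value on a class is `cofactor • (any lift)`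
      (∀ x' : Polynomial ℤ_[p] × Polynomial ℤ_[p],
        h (proj p n x') = cofactor p n m • proj p m x') ∧
      -- injectivity
      Function.Injective h ∧
      -- the cokernel is a free `ℤ_p`-module
      Module.Free ℤ_[p]
        ((IwasawaLevel p m × IwasawaLevel p m) ⧸ LinearMap.range h) ∧
      -- surjectivity of the induced map on `Hom_{ℤ_p}(-, ℤ/p^j)` for all `j ≥ 1`
      (∀ j : ℕ, 1 ≤ j →
        letI : Module ℤ_[p] (ZMod (p ^ j)) := zmodModule p j
        Function.Surjective
          (fun f : (IwasawaLevel p m × IwasawaLevel p m) →ₗ[ℤ_[p]] ZMod (p ^ j) =>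
            f ∘ₗ h)) := by
  classical
  let hmap : (IwasawaLevel p n × IwasawaLevel p n) →ₗ[ℤ_[p]]
      (IwasawaLevel p m × IwasawaLevel p m) :=
    ((hOne p hnm).prodMap (hOne p hnm)).restrictScalars ℤ_[p]
  have hmap_apply : ∀ x, hmap x = (hOne p hnm x.1, hOne p hnm x.2) := fun x => rfl
  have hinj : Function.Injective hmap := by
    intro x y hxy
    have e1 : hOne p hnm x.1 = hOne p hnm y.1 := congrArg Prod.fst hxy
    have e2 : hOne p hnm x.2 = hOne p hnm y.2 := congrArg Prod.snd hxy
    exact Prod.ext (hOne_inj p hnm e1) (hOne_inj p hnm e2)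
  -- the quotient is free
  haveI hfreeJ := free_J p n m
  have hfree : Module.Free ℤ_[p]
      ((IwasawaLevel p m × IwasawaLevel p m) ⧸ LinearMap.range hmap) := by
    let Ψ : (IwasawaLevel p m × IwasawaLevel p m) →ₗ[ℤ_[p]]
        ((Polynomial ℤ_[p] ⧸ Jspan p n m) × (Polynomial ℤ_[p] ⧸ Jspan p n m)) :=
      ((piMap p hnm).prodMap (piMap p hnm)).restrictScalars ℤ_[p]
    have hΨ : Function.Surjective Ψ := by
      intro y
      obtain ⟨a, ha⟩ := piMap_surj p hnm y.1
      obtain ⟨b, hb⟩ := piMap_surj p hnm y.2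
      exact ⟨(a, b), Prod.ext ha hb⟩
    have hrange : LinearMap.range hmap = LinearMap.ker Ψ := by
      ext x
      constructor
      · rintro ⟨w, rfl⟩
        exact LinearMap.mem_ker.mpr
          (Prod.ext (piMap_comp_hOne p hnm w.1) (piMap_comp_hOne p hnm w.2))
      · intro hx
        have hx' : Ψ x = 0 := LinearMap.mem_ker.mp hx
        obtain ⟨w1, e1⟩ := piMap_zero p hnm x.1 (congrArg Prod.fst hx')
        obtain ⟨w2, e2⟩ := piMap_zero p hnm x.2 (congrArg Prod.snd hx')
        exact ⟨(w1, w2), Prod.ext e1 e2⟩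
    exact Module.Free.of_equiv
      ((Submodule.quotEquivOfEq _ _ hrange).trans (Ψ.quotKerEquivOfSurjective hΨ)).symm
  -- a retraction of hmap
  haveI := hfree
  obtain ⟨s, hs⟩ := Module.projective_lifting_property ((LinearMap.range hmap).mkQ)
    LinearMap.id (Submodule.mkQ_surjective _)
  let e := LinearEquiv.ofInjective hmap hinj
  have ht : ∀ x, x - s ((LinearMap.range hmap).mkQ x) ∈ LinearMap.range hmap := by
    intro x
    have h2 := LinearMap.congr_fun hs ((LinearMap.range hmap).mkQ x)
    simp only [LinearMap.comp_apply, LinearMap.id_apply] at h2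
    rw [← Submodule.Quotient.mk_eq_zero, ← Submodule.mkQ_apply, map_sub, h2, sub_self]
  let t : (IwasawaLevel p m × IwasawaLevel p m) →ₗ[ℤ_[p]] LinearMap.range hmap :=
    LinearMap.codRestrict _ (LinearMap.id - s ∘ₗ (LinearMap.range hmap).mkQ) ht
  let r : (IwasawaLevel p m × IwasawaLevel p m) →ₗ[ℤ_[p]]
      (IwasawaLevel p n × IwasawaLevel p n) := e.symm.toLinearMap ∘ₗ t
  have hr : r ∘ₗ hmap = LinearMap.id := by
    apply LinearMap.ext; intro y
    have h0 : (LinearMap.range hmap).mkQ (hmap y) = 0 :=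
      (Submodule.Quotient.mk_eq_zero _).mpr ⟨y, rfl⟩
    have hty : t (hmap y) = e y := by
      apply Subtype.ext
      simp [t, h0, e, LinearEquiv.ofInjective_apply, LinearMap.codRestrict_apply]
    show e.symm (t (hmap y)) = y
    rw [hty, LinearEquiv.symm_apply_apply]
  refine ⟨hmap, ?_, hinj, hfree, ?_⟩
  · intro x'
    rw [hmap_apply]
    exact Prod.ext (cofactor_smul p hnm x'.1) (cofactor_smul p hnm x'.2)
  · intro j hj
    exact @surj_of_retraction ℤ_[p] _ _ _ _ _ _ _ hmap r hr (ZMod (p ^ j)) _ (zmodModule p j)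
end

section
/- Let Λ_n = Z_p[X]/((1+X)^{p^n}-1) and let ω_n^+, ω_n^- be the coprime factorization of (1+X)^{p^n}-1 into plus and minus parts. Then the Z_p-module Λ_n/(ω_n^+ + ω_n^-) (the quotient by the ideal generated by both ω_n^+ and ω_n^-) is finite. -/
open Polynomial

noncomputable def omegaPlus (p : ℕ) [Fact p.Prime] (n : ℕ) : Polynomial ℤ_[p] :=
  ∏ k ∈ (Finset.Icc 1 n).filter (fun k => Even k),
    (Polynomial.cyclotomic (p ^ k) ℤ_[p]).comp (Polynomial.X + 1)

noncomputable def omegaMinus (p : ℕ) [Fact p.Prime] (n : ℕ) : Polynomial ℤ_[p] :=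
  ((Polynomial.X + 1) - 1) *
    ∏ k ∈ (Finset.Icc 1 n).filter (fun k => Odd k),
      (Polynomial.cyclotomic (p ^ k) ℤ_[p]).comp (Polynomial.X + 1)

/-! ### Auxiliary lemmas -/

lemma aux_range_succ (n : ℕ) : Finset.range (n + 1) = insert 0 (Finset.Icc 1 n) := by
  ext k; simp only [Finset.mem_range, Finset.mem_insert, Finset.mem_Icc]; omega

/-- Product formula: `ω⁺ * ω⁻ = (1+X)^{p^n} - 1`. -/
lemma omega_mul (p : ℕ) [Fact p.Prime] (n : ℕ) :
    omegaPlus p n * omegaMinus p n = (1 + X : Polynomial ℤ_[p]) ^ (p ^ n) - 1 := by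
  have hp : p.Prime := Fact.out
  have key : (∏ k ∈ Finset.range (n + 1), (cyclotomic (p ^ k) ℤ_[p]).comp (X + 1))
      = (1 + X : Polynomial ℤ_[p]) ^ (p ^ n) - 1 := by
    have : (∏ k ∈ Finset.range (n + 1), (cyclotomic (p ^ k) ℤ_[p]).comp (X + 1))
        = ((X : Polynomial ℤ_[p]) ^ (p ^ n) - 1).comp (X + 1) := by
      rw [← prod_cyclotomic_eq_X_pow_sub_one (pow_pos hp.pos n) (ℤ_[p]),
        Nat.prod_divisors_prime_pow hp]
      simp only [comp_eq_aeval, map_prod]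
    rw [this]
    simp only [sub_comp, pow_comp, X_comp, one_comp]
    ring_nf
  rw [← key, aux_range_succ, Finset.prod_insert (by simp),
    ← Finset.prod_filter_mul_prod_filter_not (Finset.Icc 1 n) (fun k => Even k)]
  have : Finset.filter (fun k => ¬ Even k) (Finset.Icc 1 n)
      = Finset.filter (fun k => Odd k) (Finset.Icc 1 n) := by
    apply Finset.filter_congr; intro x _; simp [Nat.not_even_iff_odd]
  rw [this]
  simp only [omegaPlus, omegaMinus, pow_zero, cyclotomic_one, sub_comp, X_comp, one_comp]
  ring

/-- In a field, `X` is coprime to any polynomial with nonzero constant term. -/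
lemma isCoprime_X_of_eval_zero {K : Type*} [Field K] {f : K[X]} (h : eval 0 f ≠ 0) :
    IsCoprime (X : K[X]) f := by
  refine ⟨-(C (eval 0 f)⁻¹ * f.divX), C (eval 0 f)⁻¹, ?_⟩
  have hf := Polynomial.X_mul_divX_add f
  rw [coeff_zero_eq_eval_zero] at hf
  have : (C (eval 0 f)⁻¹) * (X * f.divX + C (eval 0 f)) = C (eval 0 f)⁻¹ * f := by rw [hf]
  rw [mul_add, ← C_mul, inv_mul_cancel₀ h, C_1] at this
  linear_combination -this

/-- The coercion ring hom `ℤ_[p] →+* ℚ_[p]`. -/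
noncomputable abbrev padicCoe (p : ℕ) [Fact p.Prime] : ℤ_[p] →+* ℚ_[p] := PadicInt.Coe.ringHom

lemma cyclo_comp_coprime (p : ℕ) [Fact p.Prime] {k l : ℕ} (h : k ≠ l) :
    IsCoprime ((cyclotomic (p ^ k) ℚ_[p]).comp (X + 1))
      ((cyclotomic (p ^ l) ℚ_[p]).comp (X + 1)) := by
  have hp : p.Prime := Fact.out
  have h1 : p ^ k ≠ p ^ l := fun he => h (Nat.pow_right_injective hp.two_le he)
  have h2 := (Polynomial.cyclotomic.isCoprime_rat h1).map
    (mapRingHom (algebraMap ℚ ℚ_[p]))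
  simp only [coe_mapRingHom, map_cyclotomic] at h2
  have h3 := h2.map (aeval (X + 1 : Polynomial ℚ_[p])).toRingHom
  simpa only [AlgHom.toRingHom_eq_coe, RingHom.coe_coe, comp_eq_aeval] using h3

lemma cyclo_comp_coprime_X (p : ℕ) [Fact p.Prime] {k : ℕ} (hk : 1 ≤ k) :
    IsCoprime (X : Polynomial ℚ_[p]) ((cyclotomic (p ^ k) ℚ_[p]).comp (X + 1)) := by
  have hp : p.Prime := Fact.out
  apply isCoprime_X_of_eval_zero
  rw [eval_comp]
  simp only [eval_add, eval_X, eval_one, zero_add]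
  obtain ⟨j, rfl⟩ : ∃ j, k = j + 1 := ⟨k - 1, by omega⟩
  rw [eval_one_cyclotomic_prime_pow]
  exact_mod_cast hp.ne_zero

lemma omega_coprime (p : ℕ) [Fact p.Prime] (n : ℕ) :
    IsCoprime ((omegaPlus p n).map (padicCoe p)) ((omegaMinus p n).map (padicCoe p)) := by
  simp only [omegaPlus, omegaMinus, Polynomial.map_mul, Polynomial.map_prod,
    Polynomial.map_comp, map_cyclotomic, Polynomial.map_add, Polynomial.map_one,
    Polynomial.map_sub, Polynomial.map_X, add_sub_cancel_right]
  apply IsCoprime.mul_right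
  · apply IsCoprime.prod_left
    intro k hk
    simp only [Finset.mem_filter, Finset.mem_Icc] at hk
    exact (cyclo_comp_coprime_X p hk.1.1).symm
  · apply IsCoprime.prod_left
    intro k hk
    apply IsCoprime.prod_right
    intro l hl
    simp only [Finset.mem_filter, Finset.mem_Icc] at hk hl
    apply cyclo_comp_coprime p
    intro he
    subst he
    exact (Nat.not_even_iff_odd.2 hl.2) hk.2

lemma exists_pow_mul_lift (p : ℕ) [Fact p.Prime] (f : Polynomial ℚ_[p]) :
    ∃ (m : ℕ) (g : Polynomial ℤ_[p]),
      g.map (padicCoe p) = (p : Polynomial ℚ_[p]) ^ m * f := by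
  have hp : p.Prime := Fact.out
  have hbound : ∀ c : ℚ_[p], ∃ m : ℕ, ‖(p : ℚ_[p]) ^ m * c‖ ≤ 1 := by
    intro c
    obtain ⟨m, hm⟩ := pow_unbounded_of_one_lt ‖c‖
      (by exact_mod_cast hp.one_lt : (1 : ℝ) < (p : ℝ))
    refine ⟨m, ?_⟩
    rw [norm_mul, norm_pow, Padic.norm_p, inv_pow]
    rw [inv_mul_le_iff₀ (pow_pos (by exact_mod_cast hp.pos : (0:ℝ) < p) m)]
    simpa using hm.le
  choose mfun hmfun using hbound
  set m := f.support.sup (fun i => mfun (f.coeff i)) with hm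
  have key : ∀ i : ℕ, ‖(p : ℚ_[p]) ^ m * f.coeff i‖ ≤ 1 := by
    intro i
    by_cases hi : i ∈ f.support
    · have hle : mfun (f.coeff i) ≤ m := Finset.le_sup (f := fun j => mfun (f.coeff j)) hi
      have : (p : ℚ_[p]) ^ m * f.coeff i
          = (p : ℚ_[p]) ^ (m - mfun (f.coeff i)) *
            ((p : ℚ_[p]) ^ (mfun (f.coeff i)) * f.coeff i) := by
        rw [← mul_assoc, ← pow_add]
        congr 2
        omega
      rw [this, norm_mul]
      calc ‖(p : ℚ_[p]) ^ (m - mfun (f.coeff i))‖ *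
            ‖(p : ℚ_[p]) ^ (mfun (f.coeff i)) * f.coeff i‖
          ≤ 1 * 1 := by
            apply mul_le_mul _ (hmfun _) (norm_nonneg _) zero_le_one
            rw [norm_pow, Padic.norm_p, inv_pow]
            apply inv_le_one_of_one_le₀
            exact one_le_pow₀ (by exact_mod_cast hp.one_le)
        _ = 1 := by ring
    · simp only [Polynomial.notMem_support_iff] at hi
      simp [hi]
  have : ((p : Polynomial ℚ_[p]) ^ m * f) ∈ lifts (padicCoe p) := by
    rw [lifts_iff_coeff_lifts]
    intro i
    have : ((p : Polynomial ℚ_[p]) ^ m * f).coeff i = (p : ℚ_[p]) ^ m * f.coeff i := by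
      have hc : (p : Polynomial ℚ_[p]) ^ m = C ((p : ℚ_[p]) ^ m) := by
        rw [map_pow, Polynomial.C_eq_natCast]
      rw [hc, coeff_C_mul]
    rw [this]
    exact ⟨⟨(p : ℚ_[p]) ^ m * f.coeff i, key i⟩, rfl⟩
  obtain ⟨g, hg⟩ := (mem_lifts _).1 this
  exact ⟨m, g, hg⟩

lemma pow_p_mem_span (p : ℕ) [Fact p.Prime] (n : ℕ) :
    ∃ M : ℕ, (p : Polynomial ℤ_[p]) ^ M ∈ Ideal.span {omegaPlus p n, omegaMinus p n} := by
  obtain ⟨a, b, hab⟩ := omega_coprime p n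
  obtain ⟨ma, ga, hga⟩ := exists_pow_mul_lift p a
  obtain ⟨mb, gb, hgb⟩ := exists_pow_mul_lift p b
  refine ⟨ma + mb, Ideal.mem_span_pair.2
    ⟨(p : Polynomial ℤ_[p]) ^ mb * ga, (p : Polynomial ℤ_[p]) ^ ma * gb, ?_⟩⟩
  have hinj : Function.Injective (padicCoe p) := Subtype.coe_injective
  apply Polynomial.map_injective _ hinj
  rw [Polynomial.map_add, Polynomial.map_mul, Polynomial.map_mul, Polynomial.map_mul,
    Polynomial.map_mul, Polynomial.map_pow, Polynomial.map_pow, Polynomial.map_pow,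
    Polynomial.map_natCast, hga, hgb]
  linear_combination ((p : Polynomial ℚ_[p]) ^ (ma + mb)) * hab

open PadicInt in
lemma toZModPow_surjective (p : ℕ) [Fact p.Prime] (M : ℕ) :
    Function.Surjective (PadicInt.toZModPow (p := p) M) := by
  have hp : p.Prime := Fact.out
  haveI : NeZero (p ^ M) := ⟨pow_ne_zero _ hp.ne_zero⟩
  intro a
  refine ⟨((a.val : ℕ) : ℤ_[p]), ?_⟩
  rw [map_natCast, ZMod.natCast_zmod_val]

lemma finite_quotient_aux (p : ℕ) [Fact p.Prime] (K : Ideal (Polynomial ℤ_[p]))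
    {f : Polynomial ℤ_[p]} (hmonic : f.Monic) (hfK : f ∈ K) {M : ℕ}
    (hpK : (p : Polynomial ℤ_[p]) ^ M ∈ K) : Finite (Polynomial ℤ_[p] ⧸ K) := by
  have hp : p.Prime := Fact.out
  haveI : NeZero (p ^ M) := ⟨pow_ne_zero _ hp.ne_zero⟩
  by_cases hf1 : f = 1
  · have hK : K = ⊤ := Ideal.eq_top_iff_one K |>.2 (hf1 ▸ hfK)
    have : Subsingleton (Polynomial ℤ_[p] ⧸ K) :=
      (Submodule.Quotient.subsingleton_iff (p := K)).2 hK
    exact Finite.of_subsingleton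
  set D := f.natDegree with hD
  set s : ZMod (p ^ M) → ℤ_[p] := Function.surjInv (toZModPow_surjective p M) with hs
  have hsec : ∀ x : ZMod (p ^ M), PadicInt.toZModPow M (s x) = x :=
    fun x => Function.surjInv_eq (toZModPow_surjective p M) x
  set F : (Fin D → ZMod (p ^ M)) → (Polynomial ℤ_[p] ⧸ K) :=
    fun a => Ideal.Quotient.mk K (∑ i : Fin D, C (s (a i)) * X ^ (i : ℕ)) with hF
  apply Finite.of_surjective F
  intro q
  obtain ⟨f₀, rfl⟩ := Ideal.Quotient.mk_surjective q
  set r := f₀ %ₘ f with hr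
  have hrq : Ideal.Quotient.mk K r = Ideal.Quotient.mk K f₀ := by
    rw [Ideal.Quotient.eq, hr, modByMonic_eq_sub_mul_div _ f]
    have : f₀ - f * (f₀ /ₘ f) - f₀ = -(f * (f₀ /ₘ f)) := by ring
    rw [this]
    exact neg_mem (Ideal.mul_mem_right _ _ hfK)
  have hdeg : r.natDegree < D := natDegree_modByMonic_lt f₀ hmonic hf1
  set c : Fin D → ZMod (p ^ M) := fun i => PadicInt.toZModPow M (r.coeff i) with hc
  refine ⟨c, ?_⟩
  rw [hF]
  dsimp only
  rw [hrq.symm, Ideal.Quotient.eq]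
  have hrsum : r = ∑ i : Fin D, C (r.coeff i) * X ^ (i : ℕ) := by
    conv_lhs => rw [r.as_sum_range' D hdeg]
    rw [← Fin.sum_univ_eq_sum_range (fun i => (monomial i) (r.coeff i)) D]
    simp [C_mul_X_pow_eq_monomial]
  rw [hrsum, ← Finset.sum_sub_distrib]
  apply Ideal.sum_mem
  intro i _
  have : C (s (c i)) * X ^ (i : ℕ) - C (r.coeff i) * X ^ (i : ℕ)
      = C (s (c i) - r.coeff i) * X ^ (i : ℕ) := by
    rw [map_sub, sub_mul]
  rw [this]
  have hker : s (c i) - r.coeff i ∈ Ideal.span {(p : ℤ_[p]) ^ M} := by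
    rw [← PadicInt.ker_toZModPow, RingHom.mem_ker, map_sub, hsec, hc, sub_self]
  obtain ⟨e, he⟩ := Ideal.mem_span_singleton'.1 hker
  rw [← he]
  have : C (e * (p : ℤ_[p]) ^ M) * X ^ (i : ℕ)
      = (p : Polynomial ℤ_[p]) ^ M * (C e * X ^ (i : ℕ)) := by
    rw [map_mul, map_pow, Polynomial.C_eq_natCast]
    ring
  rw [this]
  exact Ideal.mul_mem_right _ _ hpK

/-- the quotient `Λ_n/(ω_n^+, ω_n^-)` is finite. -/
theorem quotient_by_both_omegas_finite (p : ℕ) [Fact p.Prime] (n : ℕ) :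
    Finite (IwasawaLevel p n ⧸ Ideal.span
      {Ideal.Quotient.mk (levelIdeal p n) (omegaPlus p n),
       Ideal.Quotient.mk (levelIdeal p n) (omegaMinus p n)}) := by
  have hp : p.Prime := Fact.out
  obtain ⟨M, hM⟩ := pow_p_mem_span p n
  set I := levelIdeal p n with hI
  set J := Ideal.span {omegaPlus p n, omegaMinus p n} with hJ
  have hmap : Ideal.span {Ideal.Quotient.mk I (omegaPlus p n),
      Ideal.Quotient.mk I (omegaMinus p n)} = J.map (Ideal.Quotient.mk I) := by
    rw [hJ, Ideal.map_span]
    congr 1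
    rw [Set.image_insert_eq, Set.image_singleton]
  rw [hmap]
  have hfin : Finite (Polynomial ℤ_[p] ⧸ (I ⊔ J)) := by
    have hmonic : ((1 + X : Polynomial ℤ_[p]) ^ (p ^ n) - 1).Monic := by
      have h1 : (1 + X : Polynomial ℤ_[p]) = X + C 1 := by rw [C_1, add_comm]
      rw [h1]
      apply Monic.sub_of_left ((monic_X_add_C (1 : ℤ_[p])).pow (p ^ n))
      rw [degree_one, degree_pow, degree_X_add_C]
      simp only [nsmul_eq_mul, mul_one]
      exact_mod_cast pow_pos hp.pos n
    apply finite_quotient_aux p (I ⊔ J) hmonic ?_ (M := M) ?_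
    · refine Ideal.mem_sup_left ?_
      rw [hI, levelIdeal]
      exact Ideal.subset_span rfl
    · exact Ideal.mem_sup_right hM
  exact Finite.of_equiv _ (DoubleQuot.quotQuotEquivQuotSup I J).symm.toEquiv
end

section
/- Let M be a cofree Λ_n-comodule, i.e., an abelian p-divisible group M with Λ_n-action whose Pontryagin dual is isomorphic to Λ_n² where Λ_n = Z_p[X]/((1+X)^{p^n}-1). Let ω^- , ω^+ be elements of Λ_n with ω^-·ω^+ = 0 in Λ_n and which are coprime in Q_p[X] (e.g. ω_n^±). Then M = M[ω^-] + M[ω^+], where M[f] denotes the kernel of multiplication by f on M. -/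
open Polynomial

/-- `ℚ_p/ℤ_p` as a `ℤ_p`-module. -/
noncomputable abbrev QZ (p : ℕ) [Fact p.Prime] : Type :=
  ℚ_[p] ⧸ LinearMap.range (Algebra.linearMap ℤ_[p] ℚ_[p])

/-- if `M` is a `p`-divisible `Λ_n`-module whose Pontryagin dual is
isomorphic to `Λ_n²` as a `Λ_n`-module, and `ω⁻, ω⁺ ∈ Λ_n` satisfy `ω⁻·ω⁺ = 0` and
are coprime in `ℚ_p[X]`, then `M = M[ω⁻] + M[ω⁺]`. -/
theorem decomposition_into_plus_minus_kernels (p : ℕ) [Fact p.Prime] (n : ℕ)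
    (M : Type) [AddCommGroup M] [Module (IwasawaLevel p n) M]
    [Module ℤ_[p] M] [IsScalarTower ℤ_[p] (IwasawaLevel p n) M]
    -- `M` is `p`-divisible
    (hdiv : ∀ m : M, ∃ m' : M, p • m' = m)
    -- the Pontryagin dual of `M` is isomorphic to `Λ_n²` as a `Λ_n`-module
    (hdual : ∃ e : (M →ₗ[ℤ_[p]] QZ p) ≃ₗ[ℤ_[p]]
        (IwasawaLevel p n × IwasawaLevel p n),
      ∀ (x : IwasawaLevel p n) (f : M →ₗ[ℤ_[p]] QZ p),
        e (f ∘ₗ ((LinearMap.lsmul (IwasawaLevel p n) M x).restrictScalars ℤ_[p])) =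
          x • e f)
    (ωm ωp : IwasawaLevel p n)
    -- `ω⁻ · ω⁺ = 0` in `Λ_n`
    (hzero : ωm * ωp = 0)
    -- `ω⁻` and `ω⁺` are coprime in `ℚ_p[X]`
    (hcop : ∃ wm wp : Polynomial ℤ_[p],
      Ideal.Quotient.mk (levelIdeal p n) wm = ωm ∧
      Ideal.Quotient.mk (levelIdeal p n) wp = ωp ∧
      IsCoprime (wm.map (algebraMap ℤ_[p] ℚ_[p])) (wp.map (algebraMap ℤ_[p] ℚ_[p]))) :
    ∀ m : M, ∃ a b : M, ωm • a = 0 ∧ ωp • b = 0 ∧ m = a + b := by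
  obtain ⟨wm, wp, hwm, hwp, u, v, huv⟩ := hcop
  -- clear denominators
  obtain ⟨⟨c1, hc1⟩, h1⟩ :=
    IsLocalization.integerNormalization_map_to_map (nonZeroDivisors ℤ_[p]) u
  obtain ⟨⟨c2, hc2⟩, h2⟩ :=
    IsLocalization.integerNormalization_map_to_map (nonZeroDivisors ℤ_[p]) v
  set U := IsLocalization.integerNormalization (nonZeroDivisors ℤ_[p]) u with hU
  set V := IsLocalization.integerNormalization (nonZeroDivisors ℤ_[p]) v with hV
  have hinj : Function.Injective (algebraMap ℤ_[p] ℚ_[p]) :=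
    IsFractionRing.injective ℤ_[p] ℚ_[p]
  have key : (C c2 * U) * wm + (C c1 * V) * wp = C (c1 * c2) := by
    apply Polynomial.map_injective _ hinj
    simp only [Polynomial.map_add, Polynomial.map_mul, Polynomial.map_C, h1, h2]
    rw [Algebra.smul_def, Algebra.smul_def, Polynomial.algebraMap_apply,
      Polynomial.algebraMap_apply, map_mul]
    calc _ = C ((algebraMap ℤ_[p] ℚ_[p]) c1) * C ((algebraMap ℤ_[p] ℚ_[p]) c2) *
        (u * Polynomial.map (algebraMap ℤ_[p] ℚ_[p]) wm +
         v * Polynomial.map (algebraMap ℤ_[p] ℚ_[p]) wp) := by ring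
      _ = _ := by rw [huv, mul_one, map_mul C]
  -- c1 * c2 = unit * p ^ k
  have hc : c1 * c2 ≠ 0 := mul_ne_zero (nonZeroDivisors.ne_zero hc1) (nonZeroDivisors.ne_zero hc2)
  set k := ((c1 * c2).valuation) with hk
  have hcu := PadicInt.unitCoeff_spec hc
  set e : ℤ_[p]ˣ := PadicInt.unitCoeff hc with he
  have key2 : (C ((e⁻¹ : ℤ_[p]ˣ) : ℤ_[p]) * (C c2 * U)) * wm
      + (C ((e⁻¹ : ℤ_[p]ˣ) : ℤ_[p]) * (C c1 * V)) * wp = C ((p : ℤ_[p]) ^ k) := by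
    calc _ = C ((e⁻¹ : ℤ_[p]ˣ) : ℤ_[p]) * ((C c2 * U) * wm + (C c1 * V) * wp) := by ring
      _ = C ((e⁻¹ : ℤ_[p]ˣ) : ℤ_[p]) * C (c1 * c2) := by rw [key]
      _ = C (((e⁻¹ : ℤ_[p]ˣ) : ℤ_[p]) * (c1 * c2)) := (map_mul C _ _).symm
      _ = C ((p : ℤ_[p]) ^ k) := by
          congr 1
          rw [hcu, ← mul_assoc, Units.inv_mul, one_mul]
  -- push to Λ_n
  set mk := Ideal.Quotient.mk (levelIdeal p n)
  set A : IwasawaLevel p n := mk (C ((e⁻¹ : ℤ_[p]ˣ) : ℤ_[p]) * (C c2 * U)) with hA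
  set B : IwasawaLevel p n := mk (C ((e⁻¹ : ℤ_[p]ˣ) : ℤ_[p]) * (C c1 * V)) with hB
  have keyΛ : A * ωm + B * ωp = ((p : IwasawaLevel p n)) ^ k := by
    have := congrArg mk key2
    simp only [map_add, map_mul, hwm, hwp] at this
    rw [hA, hB]
    simp only [map_mul]
    rw [this, map_pow, Polynomial.C_eq_natCast] at *
    rw [map_pow, map_natCast]
  -- p^k-divisibility
  have hdivk : ∀ m : M, ∃ m' : M, (p ^ k : ℕ) • m' = m := by
    intro m
    induction k with
    | zero => exact ⟨m, by simp⟩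
    | succ j ih =>
        obtain ⟨m1, hm1⟩ := ih
        obtain ⟨m2, hm2⟩ := hdiv m1
        exact ⟨m2, by rw [pow_succ, mul_smul, hm2, hm1]⟩
  intro m
  obtain ⟨m', hm'⟩ := hdivk m
  refine ⟨(B * ωp) • m', (A * ωm) • m', ?_, ?_, ?_⟩
  · rw [smul_smul]
    have h : ωm * (B * ωp) = B * (ωm * ωp) := by ring
    rw [h, hzero, mul_zero]; exact zero_smul (IwasawaLevel p n) m'
  · rw [smul_smul]
    have h : ωp * (A * ωm) = A * (ωm * ωp) := by ring
    rw [h, hzero, mul_zero]; exact zero_smul (IwasawaLevel p n) m'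
  · rw [← add_smul]
    have : B * ωp + A * ωm = ((p ^ k : ℕ) : IwasawaLevel p n) := by
      push_cast
      rw [← keyΛ]; ring
    rw [this, Nat.cast_smul_eq_nsmul, hm']
end
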